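/- Let (Ω,μ) be a finite measure space, X a Banach space, and 1 ≤ p < ∞. If a subset V of L^p(μ;X) is relatively compact in norm, then V is uniformly tight: for every ε > 0 there exists a compact set K ⊆ X such that sup_{f∈V} μ({ω : f(ω) ∉ K}) ≤ ε. -/

import Mathlib

open MeasureTheory ENNReal Filter Set Metric

lemma auxCompact {X : Type*} [NormedAddCommGroup X] [CompleteSpace X]
    (C : ℕ → Set X) (hC : ∀ k, IsCompact (C k)) :
    IsCompact (⋂ k, Metric.cthickening ((1/2 : ℝ)^k) (C k)) := by
  set K := ⋂ k, Metric.cthickening ((1/2 : ℝ)^k) (C k) with hK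
  have hclosed : IsClosed K := isClosed_iInter fun k => Metric.isClosed_cthickening
  rw [isCompact_iff_totallyBounded_isComplete]
  refine ⟨?_, hclosed.isComplete⟩
  rw [Metric.totallyBounded_iff]
  intro ε hε
  obtain ⟨k, hk⟩ := exists_pow_lt_of_lt_one (by positivity : (0:ℝ) < ε/4)
    (by norm_num : (1/2 : ℝ) < 1)
  rcases (C k).eq_empty_or_nonempty with hne | hne
  · refine ⟨∅, finite_empty, ?_⟩
    have : K ⊆ Metric.cthickening ((1/2 : ℝ)^k) (C k) := iInter_subset _ k
    simp [hne, Metric.cthickening_empty] at this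
    simp [this]
  · obtain ⟨t, htf, ht⟩ := (Metric.totallyBounded_iff.1 (hC k).totallyBounded) (ε/2)
      (by positivity)
    refine ⟨t, htf, fun x hx => ?_⟩
    have hx' : x ∈ Metric.cthickening ((1/2 : ℝ)^k) (C k) := (iInter_subset _ k) hx
    have h1 : Metric.infDist x (C k) ≤ (1/2 : ℝ)^k := by
      have := Metric.mem_cthickening_iff.1 hx'
      calc Metric.infDist x (C k) = (EMetric.infEdist x (C k)).toReal := rfl
        _ ≤ (ENNReal.ofReal ((1/2 : ℝ)^k)).toReal := ENNReal.toReal_mono ofReal_ne_top this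
        _ = (1/2 : ℝ)^k := ENNReal.toReal_ofReal (by positivity)
    obtain ⟨c, hcC, hcd⟩ := (hC k).exists_infDist_eq_dist hne x
    obtain ⟨y, hyt, hyc⟩ := mem_iUnion₂.1 (ht hcC)
    refine mem_iUnion₂.2 ⟨y, hyt, ?_⟩
    have h2 : dist x c ≤ ε/4 := by rw [← hcd]; linarith
    have h3 : dist x y ≤ dist x c + dist c y := dist_triangle _ _ _
    rw [Metric.mem_ball] at hyc ⊢
    have h5 : dist c y = dist y c := dist_comm c y
    linarith

lemma auxTight {Ω : Type*} [MeasurableSpace Ω] {X : Type*} [NormedAddCommGroup X]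
    [CompleteSpace X] (μ : Measure Ω) [IsFiniteMeasure μ] (f : Ω → X)
    (hf : AEStronglyMeasurable f μ) {η : ℝ≥0∞} (hη : 0 < η) :
    ∃ K : Set X, IsCompact K ∧ μ {ω | f ω ∉ K} ≤ η := by
  set g := hf.mk f with hgdef
  have hg : StronglyMeasurable g := hf.stronglyMeasurable_mk
  have hfg : f =ᵐ[μ] g := hf.ae_eq_mk
  -- separable range
  obtain ⟨c, hcc, hcsub⟩ := hg.isSeparable_range
  rcases c.eq_empty_or_nonempty with hce | hce
  · refine ⟨∅, isCompact_empty, ?_⟩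
    have : range g ⊆ ∅ := by simpa [hce] using hcsub
    have hΩ : ∀ ω : Ω, False := fun ω => this (mem_range_self ω)
    have huniv : (Set.univ : Set Ω) = ∅ := eq_empty_of_forall_notMem fun ω _ => hΩ ω
    calc μ {ω | f ω ∉ (∅ : Set X)} ≤ μ Set.univ := measure_mono (subset_univ _)
      _ = 0 := by rw [huniv, measure_empty]
      _ ≤ η := zero_le
  · obtain ⟨x, hx⟩ := Set.Countable.exists_eq_range hcc hce
    -- for each k find N k such that μ (A k (N k)) small
    have key : ∀ k : ℕ, ∃ N : ℕ,
        μ {ω | ∀ n ≤ N, (1/2 : ℝ)^k < dist (g ω) (x n)} ≤ η * (1/2 : ℝ≥0∞)^(k+1) := by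
      intro k
      set A : ℕ → Set Ω := fun N => {ω | ∀ n ≤ N, (1/2 : ℝ)^k < dist (g ω) (x n)} with hA
      have hmeas : ∀ N, MeasurableSet (A N) := by
        intro N
        have : A N = ⋂ n ∈ Finset.range (N+1), {ω | (1/2 : ℝ)^k < dist (g ω) (x n)} := by
          ext ω; simp [hA, Nat.lt_succ_iff]
        rw [this]
        refine MeasurableSet.biInter (Set.to_countable _) fun n _ => ?_
        exact measurableSet_lt measurable_const (hg.dist (stronglyMeasurable_const)).measurable
      have hanti : Antitone A := fun N M hNM ω hω n hn => hω n (hn.trans hNM)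
      have hiInter : ⋂ N, A N = ∅ := by
        ext ω
        simp only [mem_iInter, mem_empty_iff_false, iff_false, not_forall, hA, mem_setOf_eq]
        have hgω : g ω ∈ closure c := hcsub (mem_range_self ω)
        rw [hx] at hgω
        obtain ⟨y, ⟨n, rfl⟩, hyd⟩ := Metric.mem_closure_iff.1 hgω ((1/2 : ℝ)^k) (by positivity)
        exact ⟨n, n, le_refl n, not_lt.2 hyd.le⟩
      have := tendsto_measure_iInter_atTop (fun N => (hmeas N).nullMeasurableSet) hanti
        ⟨0, measure_ne_top μ _⟩
      rw [hiInter] at this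
      simp only [measure_empty] at this
      have hpos : (0 : ℝ≥0∞) < η * (1/2 : ℝ≥0∞)^(k+1) := by
        exact ENNReal.mul_pos hη.ne' (pow_ne_zero _ (by norm_num))
      obtain ⟨N, hN⟩ := (this.eventually_le_const hpos).exists
      exact ⟨N, hN⟩
    choose N hN using key
    set C : ℕ → Set X := fun k => x '' {n | n ≤ N k} with hC
    have hCcomp : ∀ k, IsCompact (C k) := fun k =>
      ((Set.finite_Iic (N k)).image x).isCompact
    refine ⟨⋂ k, Metric.cthickening ((1/2 : ℝ)^k) (C k), auxCompact C hCcomp, ?_⟩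
    have hsub : {ω | g ω ∉ ⋂ k, Metric.cthickening ((1/2 : ℝ)^k) (C k)} ⊆
        ⋃ k, {ω | ∀ n ≤ N k, (1/2 : ℝ)^k < dist (g ω) (x n)} := by
      intro ω hω
      simp only [mem_setOf_eq, mem_iInter, not_forall] at hω
      obtain ⟨k, hk⟩ := hω
      refine mem_iUnion.2 ⟨k, fun n hn => ?_⟩
      by_contra h
      push_neg at h
      exact hk (Metric.mem_cthickening_of_dist_le _ _ _ _ ⟨n, hn, rfl⟩ h)
    have hμg : μ {ω | g ω ∉ ⋂ k, Metric.cthickening ((1/2 : ℝ)^k) (C k)} ≤ η := by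
      calc μ _ ≤ μ (⋃ k, {ω | ∀ n ≤ N k, (1/2 : ℝ)^k < dist (g ω) (x n)}) :=
            measure_mono hsub
        _ ≤ ∑' k, μ {ω | ∀ n ≤ N k, (1/2 : ℝ)^k < dist (g ω) (x n)} := measure_iUnion_le _
        _ ≤ ∑' k, η * (1/2 : ℝ≥0∞)^(k+1) := ENNReal.tsum_le_tsum hN
        _ = η * ∑' k : ℕ, (1/2 : ℝ≥0∞)^(k+1) := by rw [ENNReal.tsum_mul_left]
        _ ≤ η * 1 := by
            gcongr
            have h4 : ∑' k : ℕ, (1/2 : ℝ≥0∞)^(k+1) = (1/2) * ∑' k : ℕ, (1/2 : ℝ≥0∞)^k := by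
              rw [← ENNReal.tsum_mul_left]
              exact tsum_congr fun k => by rw [pow_succ, mul_comm]
            rw [h4, one_div, ENNReal.tsum_geometric, ENNReal.one_sub_inv_two, inv_inv,
              ENNReal.inv_mul_cancel two_ne_zero ofNat_ne_top]
        _ = η := mul_one η
    have heq : μ {ω | f ω ∉ ⋂ k, Metric.cthickening ((1/2 : ℝ)^k) (C k)} =
        μ {ω | g ω ∉ ⋂ k, Metric.cthickening ((1/2 : ℝ)^k) (C k)} := by
      apply measure_congr
      filter_upwards [hfg] with ω hω
      show (f ω ∉ _) = (g ω ∉ _)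
      rw [hω]
    rw [heq]; exact hμg

lemma auxGeom : ∑' k : ℕ, (1/2 : ℝ≥0∞)^(k+1) ≤ 1 := by
  have h4 : ∑' k : ℕ, (1/2 : ℝ≥0∞)^(k+1) = (1/2) * ∑' k : ℕ, (1/2 : ℝ≥0∞)^k := by
    rw [← ENNReal.tsum_mul_left]
    exact tsum_congr fun k => by rw [pow_succ, mul_comm]
  rw [h4, one_div, ENNReal.tsum_geometric, ENNReal.one_sub_inv_two, inv_inv,
    ENNReal.inv_mul_cancel two_ne_zero ofNat_ne_top]

lemma auxCheb {Ω : Type*} [MeasurableSpace Ω] {X : Type*} [NormedAddCommGroup X]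
    (μ : Measure Ω) (p : ℝ≥0∞) (hp0 : p ≠ 0) (hp' : p ≠ ∞)
    {r : ℝ} (hr : 0 < r) {b : ℝ≥0∞} (hb : 0 < b) (hbt : b ≠ ∞) :
    ∃ δ : ℝ, 0 < δ ∧ ∀ h : Ω → X, AEStronglyMeasurable h μ →
      eLpNorm h p μ ≤ ENNReal.ofReal δ → μ {ω | r ≤ ‖h ω‖} ≤ b := by
  set pt := p.toReal with hptdef
  have hpt : 0 < pt := ENNReal.toReal_pos hp0 hp'
  set a := ENNReal.ofReal r with hadef
  have ha0 : a ≠ 0 := (ENNReal.ofReal_pos.2 hr).ne'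
  have hat : a ≠ ∞ := ofReal_ne_top
  have hapt0 : a ^ pt ≠ 0 := (ENNReal.rpow_pos (pos_iff_ne_zero.2 ha0) hat).ne'
  have haptt : a ^ pt ≠ ∞ := ENNReal.rpow_ne_top_of_nonneg hpt.le hat
  set d := (b * a ^ pt) ^ (1/pt) with hddef
  have hd0 : d ≠ 0 := by
    rw [hddef]
    exact (ENNReal.rpow_pos (ENNReal.mul_pos hb.ne' hapt0) (ENNReal.mul_ne_top hbt haptt)).ne'
  have hdt : d ≠ ∞ := by
    rw [hddef]
    exact ENNReal.rpow_ne_top_of_nonneg (by positivity) (ENNReal.mul_ne_top hbt haptt)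
  refine ⟨min d.toReal 1, lt_min (ENNReal.toReal_pos hd0 hdt) one_pos, fun h hmeas hnorm => ?_⟩
  have hδd : ENNReal.ofReal (min d.toReal 1) ≤ d := by
    calc ENNReal.ofReal (min d.toReal 1) ≤ ENNReal.ofReal d.toReal :=
          ENNReal.ofReal_le_ofReal (min_le_left _ _)
      _ = d := ENNReal.ofReal_toReal hdt
  have hset : {ω | r ≤ ‖h ω‖} = {ω | a ≤ (‖h ω‖₊ : ℝ≥0∞)} := by
    ext ω
    rw [mem_setOf_eq, mem_setOf_eq, ← enorm_eq_nnnorm, ← ofReal_norm, hadef,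
      ENNReal.ofReal_le_ofReal_iff (norm_nonneg _)]
  calc μ {ω | r ≤ ‖h ω‖} ≤ a⁻¹ ^ pt * eLpNorm h p μ ^ pt := by
        rw [hset]; exact meas_ge_le_mul_pow_eLpNorm_enorm μ hp0 hp' hmeas ha0 (fun h => absurd h hat)
    _ ≤ a⁻¹ ^ pt * d ^ pt := by
        gcongr
        exact hnorm.trans hδd
    _ = a⁻¹ ^ pt * (b * a ^ pt) := by
        rw [hddef, ← ENNReal.rpow_mul, one_div, inv_mul_cancel₀ hpt.ne', ENNReal.rpow_one]
    _ = (a ^ pt)⁻¹ * a ^ pt * b := by rw [ENNReal.inv_rpow]; ring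
    _ = b := by rw [ENNReal.inv_mul_cancel hapt0 haptt, one_mul]


/-- If a subset `V` of `L^p(μ;X)` (`(Ω,μ)` a finite measure space, `X` a Banach space,
`1 ≤ p < ∞`) is relatively compact in norm, then `V` is uniformly tight: for every
`ε > 0` there is a compact `K ⊆ X` with `sup_{f∈V} μ({f ∉ K}) ≤ ε`. -/
theorem uniformly_tight_of_relatively_compact
    {Ω : Type*} [MeasurableSpace Ω] {X : Type*} [NormedAddCommGroup X]
    [NormedSpace ℝ X] [CompleteSpace X]
    (μ : Measure Ω) [IsFiniteMeasure μ] (p : ℝ≥0∞) [hp : Fact (1 ≤ p)] (hp' : p ≠ ∞)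
    (V : Set (Lp X p μ)) (hV : IsCompact (closure V)) :
    ∀ ε : ℝ, 0 < ε → ∃ K : Set X, IsCompact K ∧
      ∀ f ∈ V, μ {ω | (f : Ω → X) ω ∉ K} ≤ ENNReal.ofReal ε := by
  intro ε hε
  have hp0 : p ≠ 0 := (lt_of_lt_of_le zero_lt_one hp.out).ne'
  set E := ENNReal.ofReal ε with hEdef
  have hEpos : 0 < E := ENNReal.ofReal_pos.2 hε
  have hbk : ∀ k : ℕ, 0 < E * (1/2 : ℝ≥0∞)^(k+2) ∧ E * (1/2 : ℝ≥0∞)^(k+2) ≠ ∞ := fun k =>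
    ⟨ENNReal.mul_pos hEpos.ne' (pow_ne_zero _ (by norm_num)),
     ENNReal.mul_ne_top ofReal_ne_top (pow_ne_top (by norm_num))⟩
  choose δ hδpos hδ using fun k : ℕ =>
    auxCheb (X := X) μ p hp0 hp' (r := (1/2 : ℝ)^k) (by positivity) (hbk k).1 (hbk k).2
  have hTB : TotallyBounded V := hV.totallyBounded.subset subset_closure
  choose t htf htnet using fun k : ℕ => Metric.totallyBounded_iff.1 hTB (δ k) (hδpos k)
  choose Ky hKycomp hKy using fun (k : ℕ) (y : Lp X p μ) =>
    auxTight μ (⇑y) (Lp.aestronglyMeasurable y) (hbk k).1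
  set C : ℕ → Set X := fun k => ⋃ y ∈ t k, Ky k y with hCdef
  have hCcomp : ∀ k, IsCompact (C k) := fun k =>
    (htf k).isCompact_biUnion fun y _ => hKycomp k y
  refine ⟨⋂ k, Metric.cthickening ((1/2 : ℝ)^k) (C k), auxCompact C hCcomp, fun f hfV => ?_⟩
  have hterm : ∀ k : ℕ, μ {ω | f ω ∉ Metric.cthickening ((1/2 : ℝ)^k) (C k)} ≤
      E * (1/2 : ℝ≥0∞)^(k+1) := by
    intro k
    obtain ⟨y, hyt, hyb⟩ := mem_iUnion₂.1 (htnet k hfV)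
    rw [Metric.mem_ball] at hyb
    have hnorm : eLpNorm (⇑f - ⇑y) p μ ≤ ENNReal.ofReal (δ k) := by
      rw [← Lp.edist_def, edist_dist]
      exact ENNReal.ofReal_le_ofReal hyb.le
    have hcheb := hδ k (⇑f - ⇑y) ((Lp.aestronglyMeasurable f).sub (Lp.aestronglyMeasurable y))
      hnorm
    have hsub : {ω | f ω ∉ Metric.cthickening ((1/2 : ℝ)^k) (C k)} ⊆
        {ω | (1/2 : ℝ)^k ≤ ‖(⇑f - ⇑y) ω‖} ∪ {ω | y ω ∉ Ky k y} := by
      intro ω hω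
      by_cases hy : y ω ∈ Ky k y
      · left
        simp only [mem_setOf_eq, Pi.sub_apply, ← dist_eq_norm]
        by_contra hcon
        push_neg at hcon
        exact hω (Metric.mem_cthickening_of_dist_le _ _ _ _
          (mem_iUnion₂.2 ⟨y, hyt, hy⟩) hcon.le)
      · exact Or.inr hy
    calc μ {ω | f ω ∉ Metric.cthickening ((1/2 : ℝ)^k) (C k)}
        ≤ μ ({ω | (1/2 : ℝ)^k ≤ ‖(⇑f - ⇑y) ω‖} ∪ {ω | y ω ∉ Ky k y}) := measure_mono hsub
      _ ≤ μ {ω | (1/2 : ℝ)^k ≤ ‖(⇑f - ⇑y) ω‖} + μ {ω | y ω ∉ Ky k y} := measure_union_le _ _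
      _ ≤ E * (1/2 : ℝ≥0∞)^(k+2) + E * (1/2 : ℝ≥0∞)^(k+2) := add_le_add hcheb (hKy k y)
      _ = E * (2 * (1/2 : ℝ≥0∞)^(k+2)) := by ring
      _ = E * (1/2 : ℝ≥0∞)^(k+1) := by
          congr 1
          rw [pow_succ, ← mul_assoc, mul_comm (2 : ℝ≥0∞), mul_assoc, one_div,
            ENNReal.mul_inv_cancel two_ne_zero ofNat_ne_top, mul_one]
  calc μ {ω | f ω ∉ ⋂ k, Metric.cthickening ((1/2 : ℝ)^k) (C k)}
      ≤ μ (⋃ k, {ω | f ω ∉ Metric.cthickening ((1/2 : ℝ)^k) (C k)}) := by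
        apply measure_mono
        intro ω hω
        simp only [mem_setOf_eq, mem_iInter, not_forall] at hω
        obtain ⟨k, hk⟩ := hω
        exact mem_iUnion.2 ⟨k, hk⟩
    _ ≤ ∑' k, μ {ω | f ω ∉ Metric.cthickening ((1/2 : ℝ)^k) (C k)} := measure_iUnion_le _
    _ ≤ ∑' k : ℕ, E * (1/2 : ℝ≥0∞)^(k+1) := ENNReal.tsum_le_tsum hterm
    _ = E * ∑' k : ℕ, (1/2 : ℝ≥0∞)^(k+1) := ENNReal.tsum_mul_left
    _ ≤ E * 1 := by gcongr; exact auxGeom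
    _ = E := mul_one E
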